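/- There exists a lattice point u in the cone C(δ) such that the denominator of the rational number w(u) is exactly D(δ); that is, the denominator D(δ) in the containment w(C(δ) ∩ Z^n) ⊆ (1/D(δ))Z_{≥0} is optimal. -/

import Mathlib

open scoped Pointwise

/-- The cone `C(δ)` generated by `δ`. -/
def cone {n : ℕ} (δ : Set (Fin n → ℝ)) : Set (Fin n → ℝ) :=
  {u | ∃ c : ℝ, 0 ≤ c ∧ ∃ x ∈ δ, u = c • x}

/-- denominators of `k * q` divide that of `q`. -/
lemma int_mul_den_dvd (k : ℤ) (q : ℚ) : ((k : ℚ) * q).den ∣ q.den := by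
  have := Rat.mul_den_dvd (k : ℚ) q
  simpa using this

lemma den_add_int (q : ℚ) (k : ℤ) : (q + (k : ℚ)).den = q.den := by
  refine Nat.dvd_antisymm ?_ ?_
  · simpa using Rat.add_den_dvd q (k : ℚ)
  · have := Rat.add_den_dvd (q + (k : ℚ)) ((-k : ℤ) : ℚ)
    simpa using this

lemma exists_int_div (q : ℚ) (m : ℕ) (h : q.den ∣ m) (hm : m ≠ 0) :
    ∃ a : ℤ, q = (a : ℚ) / (m : ℚ) := by
  obtain ⟨t, ht⟩ := h
  refine ⟨q.num * t, ?_⟩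
  have hden : (q.den : ℚ) ≠ 0 := by exact_mod_cast q.den_nz
  have hmq : (m : ℚ) ≠ 0 := by exact_mod_cast hm
  rw [eq_div_iff hmq]
  have : (m : ℚ) = (q.den : ℚ) * (t : ℚ) := by exact_mod_cast congrArg (Nat.cast : ℕ → ℚ) ht
  rw [this]
  push_cast
  rw [← mul_assoc, Rat.mul_den_eq_num]

lemma exists_gcd_combo {ι : Type*} [DecidableEq ι] (s : Finset ι) (f : ι → ℤ) :
    ∃ c : ι → ℤ, ∑ i ∈ s, c i * f i = s.gcd f := by
  induction s using Finset.induction_on with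
  | empty => exact ⟨0, by simp⟩
  | @insert a s ha ih =>
    obtain ⟨c, hc⟩ := ih
    refine ⟨fun i => if i = a then Int.gcdA (f a) (s.gcd f)
      else Int.gcdB (f a) (s.gcd f) * c i, ?_⟩
    rw [Finset.sum_insert ha, Finset.gcd_insert]
    have hbeta : (fun i => if i = a then Int.gcdA (f a) (s.gcd f)
        else Int.gcdB (f a) (s.gcd f) * c i) a = Int.gcdA (f a) (s.gcd f) := by simp
    rw [hbeta]
    have hsum : ∑ i ∈ s, (if i = a then Int.gcdA (f a) (s.gcd f)
        else Int.gcdB (f a) (s.gcd f) * c i) * f i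
        = Int.gcdB (f a) (s.gcd f) * ∑ i ∈ s, c i * f i := by
      rw [Finset.mul_sum]
      refine Finset.sum_congr rfl fun i hi => ?_
      rw [if_neg (by rintro rfl; exact ha hi)]
      ring
    rw [hsum, hc, ← Int.coe_gcd, Int.gcd_eq_gcd_ab]
    ring

lemma zero_mem_cone {n : ℕ} {δ : Set (Fin n → ℝ)} (hne : δ.Nonempty) : 0 ∈ cone δ := by
  obtain ⟨x, hx⟩ := hne
  exact ⟨0, le_rfl, x, hx, (zero_smul ℝ x).symm⟩

lemma smul_mem_cone {n : ℕ} {δ : Set (Fin n → ℝ)} {c : ℝ} (hc : 0 ≤ c) {x : Fin n → ℝ}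
    (hx : x ∈ δ) : c • x ∈ cone δ := ⟨c, hc, x, hx, rfl⟩

lemma add_mem_cone {n : ℕ} {δ : Set (Fin n → ℝ)} (hδ : Convex ℝ δ) (hne : δ.Nonempty) :
    ∀ a ∈ cone δ, ∀ b ∈ cone δ, a + b ∈ cone δ := by
  rintro _ ⟨c, hc, x, hx, rfl⟩ _ ⟨d, hd, y, hy, rfl⟩
  rcases eq_or_lt_of_le (add_nonneg hc hd) with h | h
  · have hc0 : c = 0 := by linarith [hc, hd]
    have hd0 : d = 0 := by linarith [hc, hd]
    simpa [hc0, hd0] using zero_mem_cone hne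
  · refine ⟨c + d, le_of_lt h, (c / (c + d)) • x + (d / (c + d)) • y,
      hδ hx hy (div_nonneg hc h.le) (div_nonneg hd h.le) (by field_simp), ?_⟩
    rw [smul_add, smul_smul, smul_smul]
    rw [mul_div_cancel₀ _ (ne_of_gt h), mul_div_cancel₀ _ (ne_of_gt h)]

/-- The denominator `D(δ)` in `w(C(δ) ∩ ℤⁿ) ⊆ (1/D(δ)) ℤ≥0` is optimal: there is a lattice
point `u` in the cone `C(δ)` whose weight `w(u) = ∑ eᵢ uᵢ` has denominator exactly `D(δ)`. -/
theorem exists_lattice_point_weight_den_eq {n : ℕ}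
    (e : Fin n → ℚ) (V : Finset (Fin n → ℤ)) (δ : Set (Fin n → ℝ))
    (hV : V.Nonempty)
    (hδ : δ = convexHull ℝ ((fun v => fun i => ((v i : ℤ) : ℝ)) '' (V : Set (Fin n → ℤ))))
    (hVe : ∀ v ∈ V, ∑ i, e i * (v i : ℚ) = 1)
    (hspan : (affineSpan ℝ δ : Set (Fin n → ℝ)) = {x | ∑ i, (e i : ℝ) * x i = 1})
    (D : ℕ) (hD : D = Finset.univ.lcm fun i => (e i).den) :
    ∃ u : Fin n → ℤ, (fun i => (u i : ℝ)) ∈ cone δ ∧ (∑ i, e i * (u i : ℚ)).den = D := by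
  classical
  -- D is positive
  have hD0 : D ≠ 0 := by
    rw [hD]
    intro h
    rw [Finset.lcm_eq_zero_iff] at h
    obtain ⟨i, -, hi⟩ := h
    have hi' : (e i).den = 0 := by exact hi
    exact (e i).den_nz hi'
  have hDdvd : ∀ i, (e i).den ∣ D := fun i => hD ▸ Finset.dvd_lcm (Finset.mem_univ i)
  -- write each e i as nn i / D
  obtain ⟨nn, hnn⟩ : ∃ nn : Fin n → ℤ, ∀ i, e i = (nn i : ℚ) / (D : ℚ) := by
    choose nn hnn using fun i => exists_int_div (e i) D (hDdvd i) hD0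
    exact ⟨nn, hnn⟩
  -- Bezout combination z
  obtain ⟨z, hz⟩ := exists_gcd_combo Finset.univ nn
  set h : ℤ := Finset.univ.gcd nn with hh
  set g : ℚ := (h : ℚ) / (D : ℚ) with hg
  have hDQ : ((D : ℚ)) ≠ 0 := by exact_mod_cast hD0
  have hgz : ∑ i, e i * (z i : ℚ) = g := by
    simp_rw [hnn]
    rw [hg, ← hz]
    push_cast
    rw [Finset.sum_div]
    refine Finset.sum_congr rfl fun i _ => ?_
    ring
  -- den g = D
  have hgden : g.den = D := by
    refine Nat.dvd_antisymm ?_ ?_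
    · have h1 : Rat.divInt h (D : ℤ) = g := by rw [Rat.divInt_eq_div, hg]; push_cast; ring
      have := Rat.den_dvd h (D : ℤ)
      rw [h1] at this
      exact_mod_cast this
    · rw [hD]
      refine Finset.lcm_dvd fun i _ => ?_
      obtain ⟨m, hm⟩ : h ∣ nn i := Finset.gcd_dvd (Finset.mem_univ i)
      have : e i = (m : ℚ) * g := by rw [hnn i, hm, hg]; push_cast; ring
      rw [this]
      exact int_mul_den_dvd m g
  -- geometry setup
  set V' : Set (Fin n → ℝ) := (fun v => fun i => ((v i : ℤ) : ℝ)) '' (V : Set (Fin n → ℤ)) with hV'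
  have hVδ : V' ⊆ δ := hδ ▸ subset_convexHull ℝ V'
  have hδconv : Convex ℝ δ := hδ ▸ convex_convexHull ℝ V'
  obtain ⟨v0, hv0⟩ := hV
  have hδne : δ.Nonempty := ⟨_, hVδ ⟨v0, hv0, rfl⟩⟩
  have haff : (affineSpan ℝ V' : Set (Fin n → ℝ)) = {x | ∑ i, (e i : ℝ) * x i = 1} := by
    rw [← hspan, hδ, affineSpan_convexHull]
  have hwt : ∀ v ∈ V, ∑ i, (e i : ℝ) * ((v i : ℤ) : ℝ) = 1 := by
    intro v hv
    have := hVe v hv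
    have : ((∑ i, e i * (v i : ℚ) : ℚ) : ℝ) = ((1 : ℚ) : ℝ) := by rw [this]
    push_cast at this
    exact this
  -- span V' = ⊤
  have hspanV : Submodule.span ℝ V' = ⊤ := by
    rw [Submodule.eq_top_iff']
    intro y
    set x0 : Fin n → ℝ := fun i => ((v0 i : ℤ) : ℝ) with hx0def
    have hx0V' : x0 ∈ V' := ⟨v0, hv0, rfl⟩
    have hx0 : x0 ∈ Submodule.span ℝ V' := Submodule.subset_span hx0V'
    set t : ℝ := ∑ i, (e i : ℝ) * y i with ht
    have hx0H : ∑ i, (e i : ℝ) * x0 i = 1 := hwt v0 hv0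
    have hmem : y + (1 - t) • x0 ∈ (affineSpan ℝ V' : Set (Fin n → ℝ)) := by
      rw [haff]
      show ∑ i, (e i : ℝ) * (y i + (1 - t) * x0 i) = 1
      have : ∑ i, (e i : ℝ) * (y i + (1 - t) * x0 i)
          = (∑ i, (e i : ℝ) * y i) + (1 - t) * ∑ i, (e i : ℝ) * x0 i := by
        rw [Finset.mul_sum, ← Finset.sum_add_distrib]
        refine Finset.sum_congr rfl fun i _ => by ring
      rw [this, hx0H, ← ht]
      ring
    have hy' : y + (1 - t) • x0 ∈ Submodule.span ℝ V' := affineSpan_subset_span hmem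
    have : y = (y + (1 - t) • x0) - (1 - t) • x0 := by abel
    rw [this]
    exact Submodule.sub_mem _ hy' (Submodule.smul_mem _ _ hx0)
  obtain ⟨b, hbV, hbspan, hbli⟩ := exists_linearIndependent ℝ V'
  rw [hspanV] at hbspan
  haveI : Fintype b := (Set.Finite.subset (V.finite_toSet.image _) hbV).fintype
  let B : Module.Basis b ℝ (Fin n → ℝ) := Module.Basis.mk hbli (by rw [Subtype.range_coe, hbspan])
  have hB : ∀ j : b, B j = (j : Fin n → ℝ) := fun j => by rw [Module.Basis.mk_apply]
  -- integer preimages of basis vectors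
  have hpre : ∀ j : b, ∃ v, v ∈ V ∧ (fun i => ((v i : ℤ) : ℝ)) = (j : Fin n → ℝ) := by
    intro j
    obtain ⟨v, hv, hveq⟩ := hbV j.2
    exact ⟨v, hv, hveq⟩
  choose w hwV hweq using hpre
  set z' : Fin n → ℝ := fun i => ((z i : ℤ) : ℝ) with hz'
  set r : b → ℝ := fun j => B.repr z' j with hr
  -- choose N large
  obtain ⟨N, hNr⟩ : ∃ N : ℕ, ∀ j : b, -(r j) ≤ (D : ℝ) * N := by
    obtain ⟨N, hN⟩ := exists_nat_ge (∑ j : b, |r j|)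
    refine ⟨N, fun j => ?_⟩
    have h1 : |r j| ≤ ∑ j : b, |r j| :=
      Finset.single_le_sum (fun j _ => abs_nonneg (r j)) (Finset.mem_univ j)
    have h2 : (N : ℝ) ≤ (D : ℝ) * N := by
      have : (1 : ℝ) ≤ (D : ℝ) := by exact_mod_cast Nat.one_le_iff_ne_zero.mpr hD0
      nlinarith [Nat.cast_nonneg (α := ℝ) N]
    calc -(r j) ≤ |r j| := neg_le_abs _
      _ ≤ ∑ j : b, |r j| := h1
      _ ≤ N := hN
      _ ≤ (D : ℝ) * N := h2
  refine ⟨fun i => z i + (D * N : ℕ) * ∑ j : b, w j i, ?_, ?_⟩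
  · -- membership in the cone
    have key : (fun i => ((z i + (D * N : ℕ) * ∑ j : b, w j i : ℤ) : ℝ))
        = ∑ j : b, (r j + (D : ℝ) * N) • (B j : Fin n → ℝ) := by
      have h1 : ∑ j : b, (r j + (D : ℝ) * N) • (B j : Fin n → ℝ)
          = (∑ j : b, r j • B j) + ((D : ℝ) * N) • ∑ j : b, (B j : Fin n → ℝ) := by
        rw [Finset.smul_sum, ← Finset.sum_add_distrib]
        refine Finset.sum_congr rfl fun j _ => by rw [add_smul]
      rw [h1, B.sum_repr z']
      funext i
      have h2 : ∀ j : b, (B j : Fin n → ℝ) i = ((w j i : ℤ) : ℝ) := by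
        intro j
        rw [hB j, ← hweq j]
      have h3 : (∑ j : b, (B j : Fin n → ℝ)) i = ∑ j : b, ((w j i : ℤ) : ℝ) := by
        rw [Finset.sum_apply]
        exact Finset.sum_congr rfl fun j _ => by rw [h2 j]
      simp only [Pi.add_apply, Pi.smul_apply, smul_eq_mul, h3, hz']
      push_cast
      ring
    rw [key]
    refine Finset.sum_induction _ (· ∈ cone δ)
      (fun a b ha hb => add_mem_cone hδconv hδne a ha b hb)
      (zero_mem_cone hδne) fun j _ => ?_
    refine smul_mem_cone ?_ (hVδ (by rw [hB j]; exact hbV j.2))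
    have := hNr j
    linarith
  · -- the weight has denominator D
    have hwsum : ∑ i, e i * ((z i + (D * N : ℕ) * ∑ j : b, w j i : ℤ) : ℚ)
        = g + ((D * N * Fintype.card b : ℤ) : ℚ) := by
      have e1 : ∀ i, e i * ((z i + (D * N : ℕ) * ∑ j : b, w j i : ℤ) : ℚ)
          = e i * (z i : ℚ) + ((D * N : ℕ) : ℚ) * ∑ j : b, e i * ((w j i : ℤ) : ℚ) := by
        intro i
        push_cast
        rw [← Finset.mul_sum]
        ring
      have expand : ∑ i, e i * ((z i + (D * N : ℕ) * ∑ j : b, w j i : ℤ) : ℚ)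
          = (∑ i, e i * (z i : ℚ))
            + ((D * N : ℕ) : ℚ) * ∑ j : b, (∑ i, e i * ((w j i : ℤ) : ℚ)) := by
        rw [Finset.sum_congr rfl fun i _ => e1 i, Finset.sum_add_distrib,
          ← Finset.mul_sum, Finset.sum_comm]
      rw [expand, hgz]
      congr 1
      have : ∀ j : b, (∑ i, e i * ((w j i : ℤ) : ℚ)) = 1 := fun j => hVe (w j) (hwV j)
      simp only [this]
      push_cast
      simp [Finset.card_univ, mul_assoc]
    rw [hwsum, den_add_int, hgden]
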